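/- Let X ⊆ ℝⁿ be convex, φ_i convex, x° a Slater point (φ_i(x°) < 0 for all i), and x̂ ∈ X an ε-suboptimal and ε-infeasible solution of min_{u∈X, φ_i(u)≤0} (1/(2γ))‖u − y‖², i.e., |(1/(2γ))‖x̂−y‖² − (1/(2γ))‖x*−y‖²| ≤ ε and [φ_i(x̂)]₊ ≤ ε, where x* is the optimizer. Then x̃ = κx° + (1−κ)x̂ with κ = max_i [φ_i(x̂)]₊/([φ_i(x̂)]₊ − φ_i(x°)) is feasible and satisfies (1/(2γ))‖x̃−y‖² − (1/(2γ))‖x*−y‖² ≤ (κ²/(2γ))‖x°−y‖² + (κ(1−κ)/γ)‖x°−y‖·‖x̂−y‖ + ε. -/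

import Mathlib

/-- Lemma 6 (feasibility-restoration): x̃ = κx° + (1−κ)x̂ is feasible and nearly optimal
for the projection subproblem. -/
theorem stmt11 {E : Type*} [NormedAddCommGroup E] [InnerProductSpace ℝ E]
    {m : ℕ} (hm : 0 < m) (X : Set E) (hX : Convex ℝ X)
    (φ : Fin m → E → ℝ) (hφ : ∀ i, ConvexOn ℝ Set.univ (φ i))
    (xo : E) (hxo : xo ∈ X) (hslater : ∀ i, φ i xo < 0)
    (γ ε : ℝ) (hγ : 0 < γ) (hε : 0 ≤ ε) (y : E)
    (xstar : E) (hxstarX : xstar ∈ X) (hxstarfeas : ∀ i, φ i xstar ≤ 0)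
    (hxstaropt : ∀ u ∈ X, (∀ i, φ i u ≤ 0) →
      (1 / (2 * γ)) * ‖xstar - y‖ ^ 2 ≤ (1 / (2 * γ)) * ‖u - y‖ ^ 2)
    (xhat : E) (hxhatX : xhat ∈ X)
    (hsubopt : |(1 / (2 * γ)) * ‖xhat - y‖ ^ 2 - (1 / (2 * γ)) * ‖xstar - y‖ ^ 2| ≤ ε)
    (hinfeas : ∀ i, max (φ i xhat) 0 ≤ ε)
    (κ : ℝ)
    (hκ : haveI : Nonempty (Fin m) := ⟨⟨0, hm⟩⟩
      κ = Finset.univ.sup' Finset.univ_nonempty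
        (fun i => max (φ i xhat) 0 / (max (φ i xhat) 0 - φ i xo))) :
    (κ • xo + (1 - κ) • xhat ∈ X ∧ ∀ i, φ i (κ • xo + (1 - κ) • xhat) ≤ 0) ∧
    (1 / (2 * γ)) * ‖(κ • xo + (1 - κ) • xhat) - y‖ ^ 2
        - (1 / (2 * γ)) * ‖xstar - y‖ ^ 2 ≤
      (κ ^ 2 / (2 * γ)) * ‖xo - y‖ ^ 2
        + (κ * (1 - κ) / γ) * ‖xo - y‖ * ‖xhat - y‖ + ε := by
  haveI : Nonempty (Fin m) := ⟨⟨0, hm⟩⟩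
  set p : Fin m → ℝ := fun i => max (φ i xhat) 0 with hp
  have hp0 : ∀ i, 0 ≤ p i := fun i => le_max_right _ _
  have hd : ∀ i, 0 < p i - φ i xo := fun i => by
    have := hslater i; have := hp0 i; linarith
  have hκi : ∀ i, p i / (p i - φ i xo) ≤ κ := by
    intro i
    rw [hκ]
    exact Finset.le_sup' (fun i => p i / (p i - φ i xo)) (Finset.mem_univ i)
  have hκ0 : 0 ≤ κ :=
    le_trans (div_nonneg (hp0 ⟨0, hm⟩) (le_of_lt (hd ⟨0, hm⟩))) (hκi ⟨0, hm⟩)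
  have hκ1 : κ ≤ 1 := by
    rw [hκ]
    apply Finset.sup'_le
    intro i _
    rw [div_le_one (hd i)]
    have := hslater i; linarith
  have h1κ : 0 ≤ 1 - κ := by linarith
  -- feasibility
  have hmem : κ • xo + (1 - κ) • xhat ∈ X := hX hxo hxhatX hκ0 h1κ (by ring)
  have hfeas : ∀ i, φ i (κ • xo + (1 - κ) • xhat) ≤ 0 := by
    intro i
    have hcv := (hφ i).2 (Set.mem_univ xo) (Set.mem_univ xhat) hκ0 h1κ (by ring)
    simp only [smul_eq_mul] at hcv
    have h1 : φ i xhat ≤ p i := le_max_left _ _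
    have h2 : p i / (p i - φ i xo) * (p i - φ i xo) = p i :=
      div_mul_cancel₀ _ (ne_of_gt (hd i))
    have h3 := hκi i
    have h4 := hd i
    nlinarith [mul_le_mul_of_nonneg_right h3 (le_of_lt h4)]
  refine ⟨⟨hmem, hfeas⟩, ?_⟩
  -- objective
  set A := ‖xo - y‖ with hA'
  set B := ‖xhat - y‖ with hB'
  have hA : 0 ≤ A := norm_nonneg _
  have hB : 0 ≤ B := norm_nonneg _
  have hN : 0 ≤ ‖κ • xo + (1 - κ) • xhat - y‖ := norm_nonneg _
  have hv : κ • xo + (1 - κ) • xhat - y = κ • (xo - y) + (1 - κ) • (xhat - y) := by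
    module
  have hNle : ‖κ • xo + (1 - κ) • xhat - y‖ ≤ κ * A + (1 - κ) * B := by
    calc ‖κ • xo + (1 - κ) • xhat - y‖ = ‖κ • (xo - y) + (1 - κ) • (xhat - y)‖ := by
          rw [hv]
      _ ≤ ‖κ • (xo - y)‖ + ‖(1 - κ) • (xhat - y)‖ := norm_add_le _ _
      _ = κ * A + (1 - κ) * B := by
          rw [norm_smul, norm_smul, Real.norm_eq_abs, Real.norm_eq_abs,
            abs_of_nonneg hκ0, abs_of_nonneg h1κ]
  have hN2 : ‖κ • xo + (1 - κ) • xhat - y‖ ^ 2 ≤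
      κ ^ 2 * A ^ 2 + 2 * κ * (1 - κ) * A * B + B ^ 2 := by
    nlinarith [mul_le_mul_of_nonneg_left hNle hN, mul_nonneg hA hB,
      mul_nonneg hκ0 h1κ, sq_nonneg (1 - κ), mul_nonneg (mul_nonneg hκ0 hA) hB]
  have hsub : (1 / (2 * γ)) * B ^ 2 - (1 / (2 * γ)) * ‖xstar - y‖ ^ 2 ≤ ε :=
    le_trans (le_abs_self _) hsubopt
  have hpos : (0 : ℝ) < 1 / (2 * γ) := by positivity
  have key : (1 / (2 * γ)) * ‖κ • xo + (1 - κ) • xhat - y‖ ^ 2 ≤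
      (1 / (2 * γ)) * (κ ^ 2 * A ^ 2 + 2 * κ * (1 - κ) * A * B + B ^ 2) :=
    mul_le_mul_of_nonneg_left hN2 (le_of_lt hpos)
  have e : (1 / (2 * γ)) * (κ ^ 2 * A ^ 2 + 2 * κ * (1 - κ) * A * B + B ^ 2) =
      (κ ^ 2 / (2 * γ)) * A ^ 2 + (κ * (1 - κ) / γ) * A * B + (1 / (2 * γ)) * B ^ 2 := by
    field_simp
  linarith [key, hsub, e.le, e.ge]
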